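/- Let T>0 and E a separable Banach space. For each λ∈[0,1] let {A^{(λ)}(t)}_{t∈[0,T]} be a family of linear operators on E having an associated evolution system R^{(λ)}, and assume {R^{(λ)}}_{λ∈[0,1]} is a continuous family of evolution systems. Let F:[0,T]×E×[0,1]→E be continuous, locally Lipschitz in the second variable uniformly with respect to the other variables, of sublinear growth in the second variable uniformly with respect to the others (‖F(t,x,λ)‖≤c(1+‖x‖) for some c>0), and a k-set contraction for some k≥0, i.e. β(F([0,T]×Q×[0,1]))≤kβ(Q) for every bounded Q⊂E. Denote by u(·;0,T,x,λ) the unique mild solution of u'(t)=A^{(λ)}(t)u(t)+F(t,u(t),λ), u(0)=x. Then whenever (x_n,λ_n)→(x_0,λ_0) in E×[0,1], the mild solutions u(·;0,T,x_n,λ_n) converge to u(·;0,T,x_0,λ_0) in C([0,T],E). -/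

import Mathlib

open Filter Topology Set MeasureTheory

noncomputable section

variable {E : Type*} [NormedAddCommGroup E] [NormedSpace ℝ E]

/-- An evolution system `{R(t,s)}_{0 ≤ s ≤ t ≤ T}` on `E`. -/
structure IsEvolutionSystem (T : ℝ) (R : ℝ → ℝ → E →L[ℝ] E) : Prop where
  refl : ∀ t ∈ Icc (0 : ℝ) T, R t t = 1
  comp : ∀ ⦃s r t : ℝ⦄, 0 ≤ s → s ≤ r → r ≤ t → t ≤ T → R t s = (R t r).comp (R r s)
  strong_cont : ∀ x : E, ContinuousOn (fun p : ℝ × ℝ => R p.1 p.2 x)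
    {p : ℝ × ℝ | 0 ≤ p.2 ∧ p.2 ≤ p.1 ∧ p.1 ≤ T}

/-- The parameter domain `{(t,s) : 0 ≤ s ≤ t ≤ T}` of an evolution system. -/
def evolDomain (T : ℝ) : Set (ℝ × ℝ) := {p : ℝ × ℝ | 0 ≤ p.2 ∧ p.2 ≤ p.1 ∧ p.1 ≤ T}

/-- A family `{R^{(λ)}}_{λ∈[0,1]}` of evolution systems is continuous: for every `x ∈ E`
and every sequence `λₙ → λ₀` in `[0,1]`, `R^{(λₙ)}(t,s)x → R^{(λ₀)}(t,s)x` uniformly in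
`0 ≤ s ≤ t ≤ T`. -/
def IsContinuousEvolFamily (T : ℝ) (R : ℝ → ℝ → ℝ → E →L[ℝ] E) : Prop :=
  ∀ (x : E) (l : ℕ → ℝ) (l0 : ℝ), (∀ n, l n ∈ Icc (0 : ℝ) 1) → l0 ∈ Icc (0 : ℝ) 1 →
    Tendsto l atTop (𝓝 l0) →
    TendstoUniformlyOn (fun n p => R (l n) p.1 p.2 x) (fun p => R l0 p.1 p.2 x)
      atTop (evolDomain T)

/-- The map `Σ(x,w,λ)(t) = R^{(λ)}(t,0)x + ∫₀ᵗ R^{(λ)}(t,s) w(s) ds`. -/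
def evolMap (R : ℝ → ℝ → E →L[ℝ] E) (x : E) (w : ℝ → E) (t : ℝ) : E :=
  R t 0 x + ∫ s in (0 : ℝ)..t, R t s (w s)

/-- The Hausdorff measure of noncompactness of a set `Q`. -/
def hausdorffMNC (Q : Set E) : ℝ :=
  sInf {r : ℝ | 0 < r ∧ ∃ c : Finset E, Q ⊆ ⋃ y ∈ c, Metric.ball y r}

variable (T : ℝ) in
/-- `u` is a mild solution on `[0,T]` of `u' = A(t)u + g(t,u)`, `u(0) = x`, for the evolution
system `R` associated with `{A(t)}`. -/
def IsMildSolution (R : ℝ → ℝ → E →L[ℝ] E) (g : ℝ → E → E) (x : E) (u : ℝ → E) : Prop :=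
  ContinuousOn u (Icc (0 : ℝ) T) ∧
  ∀ t ∈ Icc (0 : ℝ) T, u t = R t 0 x + ∫ s in (0 : ℝ)..t, R t s (g s (u s))

/-- `F(t,x,λ)` is continuous on `[0,T] × E × [0,1]`. -/
def ParamContinuous (T : ℝ) (F : ℝ → E → ℝ → E) : Prop :=
  ContinuousOn (fun p : ℝ × E × ℝ => F p.1 p.2.1 p.2.2)
    (Icc (0 : ℝ) T ×ˢ (univ : Set E) ×ˢ Icc (0 : ℝ) 1)

/-- `F` is locally Lipschitz in the second variable, uniformly in the other variables. -/
def ParamLocallyLipschitz (T : ℝ) (F : ℝ → E → ℝ → E) : Prop :=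
  ∀ x : E, ∃ r > (0 : ℝ), ∃ Lc > (0 : ℝ), ∀ t ∈ Icc (0 : ℝ) T, ∀ lam ∈ Icc (0 : ℝ) 1,
    ∀ x₁ ∈ Metric.ball x r, ∀ x₂ ∈ Metric.ball x r,
      ‖F t x₁ lam - F t x₂ lam‖ ≤ Lc * ‖x₁ - x₂‖

/-- `F` has sublinear growth in the second variable, uniformly in the other variables. -/
def ParamSublinear (T : ℝ) (F : ℝ → E → ℝ → E) : Prop :=
  ∃ c > (0 : ℝ), ∀ t ∈ Icc (0 : ℝ) T, ∀ lam ∈ Icc (0 : ℝ) 1, ∀ x : E,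
    ‖F t x lam‖ ≤ c * (1 + ‖x‖)

/-- The image `F([0,T] × Q × [0,1])`. -/
def paramImage (T : ℝ) (F : ℝ → E → ℝ → E) (Q : Set E) : Set E :=
  {y : E | ∃ t ∈ Icc (0 : ℝ) T, ∃ x ∈ Q, ∃ lam ∈ Icc (0 : ℝ) 1, y = F t x lam}

section AuxLemmas

variable {E : Type*} [NormedAddCommGroup E] [NormedSpace ℝ E]

lemma isCompact_evolDomain (T : ℝ) : IsCompact (evolDomain T) := by
  apply IsCompact.of_isClosed_subset
    (isCompact_Icc.prod isCompact_Icc : IsCompact (Icc (0:ℝ) T ×ˢ Icc (0:ℝ) T))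
  · have : evolDomain T
        = {p : ℝ × ℝ | 0 ≤ p.2} ∩ ({p : ℝ × ℝ | p.2 ≤ p.1} ∩ {p : ℝ × ℝ | p.1 ≤ T}) := rfl
    rw [this]
    exact (isClosed_le continuous_const continuous_snd).inter
      ((isClosed_le continuous_snd continuous_fst).inter
        (isClosed_le continuous_fst continuous_const))
  · rintro ⟨t, s⟩ ⟨h0, hst, htT⟩
    exact ⟨⟨h0.trans hst, htT⟩, ⟨h0, hst.trans htT⟩⟩

lemma evol_apply_contOn {T : ℝ} {Rl : ℝ → ℝ → E →L[ℝ] E} (hR : IsEvolutionSystem T Rl)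
    {M : ℝ} (hM0 : 0 ≤ M) (hM : ∀ p ∈ evolDomain T, ‖Rl p.1 p.2‖ ≤ M)
    {w : ℝ → E} (hw : ContinuousOn w (Icc 0 T)) {t : ℝ} (ht : t ∈ Icc (0:ℝ) T) :
    ContinuousOn (fun s => Rl t s (w s)) (Icc 0 t) := by
  intro s0 hs0
  rw [Metric.continuousWithinAt_iff]
  intro ε hε
  have hdom : ((t, s0) : ℝ × ℝ) ∈ evolDomain T := ⟨hs0.1, hs0.2, ht.2⟩
  have h1 := hR.strong_cont (w s0) (t, s0) hdom
  rw [Metric.continuousWithinAt_iff] at h1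
  obtain ⟨δ1, hδ1, H1⟩ := h1 (ε/2) (by positivity)
  have hs0T : s0 ∈ Icc (0:ℝ) T := ⟨hs0.1, hs0.2.trans ht.2⟩
  have h2 := hw s0 hs0T
  rw [Metric.continuousWithinAt_iff] at h2
  obtain ⟨δ2, hδ2, H2⟩ := h2 (ε/(2*(M+1))) (by positivity)
  refine ⟨min δ1 δ2, lt_min hδ1 hδ2, fun s hs hd => ?_⟩
  have hsT : s ∈ Icc (0:ℝ) T := ⟨hs.1, hs.2.trans ht.2⟩
  have hds : ((t, s) : ℝ × ℝ) ∈ evolDomain T := ⟨hs.1, hs.2, ht.2⟩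
  have hdist : dist ((t, s) : ℝ × ℝ) ((t, s0) : ℝ × ℝ) < δ1 := by
    rw [Prod.dist_eq]
    simp only [dist_self]
    rw [max_eq_right dist_nonneg]
    exact hd.trans_le (min_le_left _ _)
  have hw2 : ‖w s - w s0‖ < ε/(2*(M+1)) := by
    rw [← dist_eq_norm]; exact H2 hsT (hd.trans_le (min_le_right _ _))
  have hR1 : dist (Rl t s (w s0)) (Rl t s0 (w s0)) < ε/2 := H1 hds hdist
  have hR0 : dist (Rl t s (w s)) (Rl t s (w s0)) ≤ ε/2 := by
    rw [dist_eq_norm, ← map_sub]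
    calc ‖Rl t s (w s - w s0)‖ ≤ ‖Rl t s‖ * ‖w s - w s0‖ := (Rl t s).le_opNorm _
    _ ≤ M * (ε/(2*(M+1))) :=
        mul_le_mul (hM (t, s) hds) hw2.le (norm_nonneg _) hM0
    _ ≤ ε/2 := by rw [mul_div_assoc'] ; rw [div_le_div_iff₀ (by positivity) (by norm_num)]; nlinarith
  calc dist (Rl t s (w s)) (Rl t s0 (w s0))
      ≤ dist (Rl t s (w s)) (Rl t s (w s0)) + dist (Rl t s (w s0)) (Rl t s0 (w s0)) :=
        dist_triangle _ _ _
    _ < ε/2 + ε/2 := by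
        exact add_lt_add_of_le_of_lt hR0 hR1
    _ = ε := by ring

end AuxLemmas
/-- Proposition 3(ii), Continuity: if `(xₙ,λₙ) → (x₀,λ₀)` in `E × [0,1]`,
the mild solutions `u(·;0,T,xₙ,λₙ)` converge to `u(·;0,T,x₀,λ₀)` in `C([0,T],E)`. -/
theorem statement_7
    {E : Type*} [NormedAddCommGroup E] [NormedSpace ℝ E] [CompleteSpace E]
    [TopologicalSpace.SeparableSpace E]
    (T : ℝ) (hT : 0 < T)
    (R : ℝ → ℝ → ℝ → E →L[ℝ] E)
    (hES : ∀ lam ∈ Icc (0 : ℝ) 1, IsEvolutionSystem T (R lam))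
    (hcont : IsContinuousEvolFamily T R)
    (F : ℝ → E → ℝ → E)
    (hFc : ParamContinuous T F)
    (hFlip : ParamLocallyLipschitz T F)
    (hFsub : ParamSublinear T F)
    (k : ℝ) (hk : 0 ≤ k)
    (hFk : ∀ Q : Set E, Bornology.IsBounded Q →
      hausdorffMNC (paramImage T F Q) ≤ k * hausdorffMNC Q)
    (x : ℕ → E) (x0 : E) (lam : ℕ → ℝ) (lam0 : ℝ)
    (hlam : ∀ n, lam n ∈ Icc (0 : ℝ) 1) (hlam0 : lam0 ∈ Icc (0 : ℝ) 1)
    (hx : Tendsto x atTop (𝓝 x0)) (hl : Tendsto lam atTop (𝓝 lam0))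
    (u : ℕ → ℝ → E) (u0 : ℝ → E)
    (hu : ∀ n, IsMildSolution T (R (lam n)) (fun s y => F s y (lam n)) (x n) (u n))
    (hu0 : IsMildSolution T (R lam0) (fun s y => F s y lam0) x0 u0) :
    TendstoUniformlyOn (fun n t => u n t) u0 atTop (Icc (0 : ℝ) T) := by
  have hT0 : (0:ℝ) ≤ T := hT.le
  have h0T : (0:ℝ) ∈ Icc (0:ℝ) T := ⟨le_refl _, hT0⟩
  have hDc : IsCompact (evolDomain T) := isCompact_evolDomain T
  -- Step A: uniform operator norm bound via Banach–Steinhaus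
  obtain ⟨M, hM1, hMb⟩ : ∃ M : ℝ, 1 ≤ M ∧ ∀ (o : Option ℕ), ∀ p ∈ evolDomain T,
      ‖(o.elim (R lam0) (fun n => R (lam n))) p.1 p.2‖ ≤ M := by
    have hpt : ∀ y : E, ∃ C, ∀ q : Option ℕ × (evolDomain T),
        ‖(q.1.elim (R lam0) fun n => R (lam n)) (q.2 : ℝ × ℝ).1 (q.2 : ℝ × ℝ).2 y‖ ≤ C := by
      intro y
      obtain ⟨C0, hC0⟩ := hDc.exists_bound_of_continuousOn ((hES lam0 hlam0).strong_cont y)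
      have hcu := hcont y lam lam0 hlam hlam0 hl
      rw [Metric.tendstoUniformlyOn_iff] at hcu
      obtain ⟨N, hN⟩ := Filter.eventually_atTop.mp (hcu 1 one_pos)
      have hAll : ∀ n : ℕ, ∃ C, ∀ p ∈ evolDomain T, ‖R (lam n) p.1 p.2 y‖ ≤ C := fun n =>
        hDc.exists_bound_of_continuousOn ((hES (lam n) (hlam n)).strong_cont y)
      choose Cf hCf using hAll
      refine ⟨max (C0 + 1) (max C0 (((Finset.range N).sup fun n => ⌈Cf n⌉₊ : ℕ) : ℝ)), ?_⟩
      rintro ⟨o, p, hp⟩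
      match o with
      | none => exact le_max_of_le_right (le_max_of_le_left (hC0 _ hp))
      | some n =>
        rcases lt_or_ge n N with h | h
        · have hle : Cf n ≤ (((Finset.range N).sup fun m => ⌈Cf m⌉₊ : ℕ) : ℝ) := by
            calc Cf n ≤ (⌈Cf n⌉₊ : ℝ) := Nat.le_ceil _
            _ ≤ _ := Nat.cast_le.2 (Finset.le_sup (f := fun m => ⌈Cf m⌉₊) (Finset.mem_range.2 h))
          exact le_max_of_le_right (le_max_of_le_right ((hCf n p hp).trans hle))
        · have h1 := hN n h p hp
          have h2 : ‖R (lam n) p.1 p.2 y‖ - ‖R lam0 p.1 p.2 y‖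
              ≤ ‖R (lam n) p.1 p.2 y - R lam0 p.1 p.2 y‖ := norm_sub_norm_le _ _
          rw [dist_comm, dist_eq_norm] at h1
          have h3 := hC0 p hp
          exact le_max_of_le_left (by simp only [Option.elim]; linarith)
    obtain ⟨C', hC'⟩ := banach_steinhaus
      (g := fun q : Option ℕ × (evolDomain T) =>
        (q.1.elim (R lam0) fun n => R (lam n)) (q.2 : ℝ × ℝ).1 (q.2 : ℝ × ℝ).2) hpt
    exact ⟨max C' 1, le_max_right _ _, fun o p hp => le_max_of_le_left (hC' (o, ⟨p, hp⟩))⟩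
  have hM0 : (0:ℝ) ≤ M := zero_le_one.trans hM1
  have hMn : ∀ n, ∀ p ∈ evolDomain T, ‖R (lam n) p.1 p.2‖ ≤ M := fun n => hMb (some n)
  have hM00 : ∀ p ∈ evolDomain T, ‖R lam0 p.1 p.2‖ ≤ M := hMb none
  have hnorm : ∀ (A : E →L[ℝ] E), ‖A‖ ≤ M → ∀ y : E, ‖A y‖ ≤ M * ‖y‖ := fun A hA y =>
    (A.le_opNorm y).trans (mul_le_mul_of_nonneg_right hA (norm_nonneg y))
  -- Step B: the compact trajectory
  have hu0c : ContinuousOn u0 (Icc (0:ℝ) T) := hu0.1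
  have hKc : IsCompact (u0 '' Icc (0:ℝ) T) := isCompact_Icc.image_of_continuousOn hu0c
  -- Step C: Lipschitz estimate in a tube around the trajectory
  obtain ⟨δ, hδ, L, hL, hLip⟩ : ∃ δ > (0:ℝ), ∃ L > (0:ℝ), ∀ t ∈ Icc (0:ℝ) T,
      ∀ l ∈ Icc (0:ℝ) 1, ∀ z ∈ u0 '' Icc (0:ℝ) T, ∀ y : E, ‖y - z‖ < δ →
      ‖F t y l - F t z l‖ ≤ L * ‖y - z‖ := by
    choose r hr Lf hLf hP using hFlip
    have hcover : u0 '' Icc (0:ℝ) T ⊆ ⋃ c ∈ u0 '' Icc (0:ℝ) T, Metric.ball c (r c / 2) :=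
      fun z hz => mem_biUnion hz (Metric.mem_ball_self (by have := hr z; positivity))
    obtain ⟨b', hb'K, hfin, hcov⟩ :=
      hKc.elim_finite_subcover_image (fun c _ => Metric.isOpen_ball) hcover
    have hKne : (u0 '' Icc (0:ℝ) T).Nonempty := ⟨u0 0, mem_image_of_mem _ h0T⟩
    have hb'ne : hfin.toFinset.Nonempty := by
      rcases hKne with ⟨z, hz⟩
      rcases mem_iUnion₂.1 (hcov hz) with ⟨c, hc, _⟩
      exact ⟨c, hfin.mem_toFinset.2 hc⟩
    refine ⟨hfin.toFinset.inf' hb'ne (fun c => r c / 2), ?_,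
      hfin.toFinset.sup' hb'ne Lf, ?_, ?_⟩
    · show (0:ℝ) < _
      rw [Finset.lt_inf'_iff]
      exact fun c _ => by have := hr c; positivity
    · rcases hb'ne with ⟨c, hc⟩
      exact lt_of_lt_of_le (hLf c) (Finset.le_sup' Lf hc)
    · intro t ht l hlmem z hz y hy
      rcases mem_iUnion₂.1 (hcov hz) with ⟨c, hc, hzc⟩
      have hc' : c ∈ hfin.toFinset := hfin.mem_toFinset.2 hc
      have hδc : hfin.toFinset.inf' hb'ne (fun c => r c / 2) ≤ r c / 2 :=
        Finset.inf'_le _ hc'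
      have hzc' : dist z c < r c / 2 := hzc
      have hzball : z ∈ Metric.ball c (r c) :=
        Metric.mem_ball.2 (hzc'.trans (by have := hr c; linarith))
      have hyball : y ∈ Metric.ball c (r c) := by
        have h1 : dist y z < r c / 2 := by
          rw [dist_eq_norm]; exact hy.trans_le hδc
        have h2 := dist_triangle y z c
        exact Metric.mem_ball.2 (by linarith)
      calc ‖F t y l - F t z l‖ ≤ Lf c * ‖y - z‖ := hP c t ht l hlmem y hyball z hzball
      _ ≤ _ := mul_le_mul_of_nonneg_right (Finset.le_sup' Lf hc') (norm_nonneg _)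
  -- continuity of `s ↦ F s (v s) l`
  have hcompF : ∀ (v : ℝ → E), ContinuousOn v (Icc (0:ℝ) T) → ∀ lm ∈ Icc (0:ℝ) 1,
      ContinuousOn (fun s => F s (v s) lm) (Icc (0:ℝ) T) := by
    intro v hv lm hlm
    have hmap : MapsTo (fun s => ((s, v s, lm) : ℝ × E × ℝ)) (Icc (0:ℝ) T)
        (Icc (0 : ℝ) T ×ˢ (univ : Set E) ×ˢ Icc (0 : ℝ) 1) :=
      fun s hs => ⟨hs, mem_univ _, hlm⟩
    exact hFc.comp (continuousOn_id.prodMk (hv.prodMk continuousOn_const)) hmap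
  -- interval integrability
  have hIntg : ∀ (lm : ℝ), lm ∈ Icc (0:ℝ) 1 → (∀ p ∈ evolDomain T, ‖R lm p.1 p.2‖ ≤ M) →
      ∀ (w : ℝ → E), ContinuousOn w (Icc (0:ℝ) T) → ∀ t ∈ Icc (0:ℝ) T,
      IntervalIntegrable (fun s => R lm t s (w s)) MeasureTheory.volume 0 t := by
    intro lm hlm hb w hw t ht
    apply ContinuousOn.intervalIntegrable
    rw [uIcc_of_le ht.1]
    exact evol_apply_contOn (hES lm hlm) hM0 hb hw ht
  -- Step D : uniform smallness of the inhomogeneous error term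
  have key1 : ∀ ε > (0:ℝ), ∀ᶠ n in atTop, ∀ t ∈ Icc (0:ℝ) T,
      ‖(R (lam n) t 0 (x n) + ∫ s in (0:ℝ)..t, R (lam n) t s (F s (u0 s) (lam n))) - u0 t‖
        < ε := by
    intro ε hε
    -- event (a) : `x n` close to `x0`
    have Ex : ∀ᶠ n in atTop, ‖x n - x0‖ < ε / (8 * (M + 1)) := by
      have := hx (Metric.ball_mem_nhds x0 (show (0:ℝ) < ε / (8 * (M + 1)) by positivity))
      filter_upwards [this] with n hn
      rw [← dist_eq_norm]; exact hn
    -- event (b) : `R (lam n) · x0` close to `R lam0 · x0`, uniformly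
    have Ex0 : ∀ᶠ n in atTop, ∀ p ∈ evolDomain T,
        dist (R lam0 p.1 p.2 x0) (R (lam n) p.1 p.2 x0) < ε / 8 := by
      have hcu := hcont x0 lam lam0 hlam hlam0 hl
      rw [Metric.tendstoUniformlyOn_iff] at hcu
      exact hcu (ε / 8) (by positivity)
    -- event (c) : uniform closeness of `F · (u0 ·) (lam n)` to `F · (u0 ·) lam0`
    have Ea : ∀ᶠ n in atTop, ∀ s ∈ Icc (0:ℝ) T,
        ‖F s (u0 s) (lam n) - F s (u0 s) lam0‖ < ε / (8 * (M + 1) * (T + 1)) := by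
      have hScomp : IsCompact (Icc (0:ℝ) T ×ˢ (u0 '' Icc (0:ℝ) T) ×ˢ Icc (0:ℝ) 1) :=
        isCompact_Icc.prod (hKc.prod isCompact_Icc)
      have hFcS : ContinuousOn (fun p : ℝ × E × ℝ => F p.1 p.2.1 p.2.2)
          (Icc (0:ℝ) T ×ˢ (u0 '' Icc (0:ℝ) T) ×ˢ Icc (0:ℝ) 1) :=
        hFc.mono (prod_mono subset_rfl (prod_mono (subset_univ _) subset_rfl))
      have hUC := hScomp.uniformContinuousOn_of_continuous hFcS
      rw [Metric.uniformContinuousOn_iff] at hUC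
      obtain ⟨δa, hδa, hUC⟩ := hUC (ε / (8 * (M + 1) * (T + 1))) (by positivity)
      have hev : ∀ᶠ n in atTop, dist (lam n) lam0 < δa := by
        have := hl (Metric.ball_mem_nhds lam0 hδa)
        filter_upwards [this] with n hn; exact hn
      filter_upwards [hev] with n hn s hs
      have hmem1 : ((s, u0 s, lam n) : ℝ × E × ℝ)
          ∈ Icc (0:ℝ) T ×ˢ (u0 '' Icc (0:ℝ) T) ×ˢ Icc (0:ℝ) 1 :=
        ⟨hs, mem_image_of_mem _ hs, hlam n⟩
      have hmem2 : ((s, u0 s, lam0) : ℝ × E × ℝ)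
          ∈ Icc (0:ℝ) T ×ˢ (u0 '' Icc (0:ℝ) T) ×ˢ Icc (0:ℝ) 1 :=
        ⟨hs, mem_image_of_mem _ hs, hlam0⟩
      have hdpq : dist ((s, u0 s, lam n) : ℝ × E × ℝ) ((s, u0 s, lam0) : ℝ × E × ℝ)
          = dist (lam n) lam0 := by
        rw [Prod.dist_eq, Prod.dist_eq, dist_self, dist_self,
          max_eq_right dist_nonneg, max_eq_right dist_nonneg]
      have := hUC _ hmem1 _ hmem2 (by rw [hdpq]; exact hn)
      rw [dist_eq_norm] at this
      exact this
    -- event (d) : uniform closeness of the evolution operators on the compact set K'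
    have Eb : ∀ᶠ n in atTop, ∀ p ∈ evolDomain T, ∀ y ∈ (fun s => F s (u0 s) lam0) '' Icc (0:ℝ) T,
        ‖R (lam n) p.1 p.2 y - R lam0 p.1 p.2 y‖ < ε / (8 * (T + 1)) := by
      set εb1 : ℝ := ε / (8 * (T + 1) * (2 * M + 2)) with hεb1
      have hεb1pos : 0 < εb1 := by rw [hεb1]; positivity
      have hK'c : IsCompact ((fun s => F s (u0 s) lam0) '' Icc (0:ℝ) T) :=
        isCompact_Icc.image_of_continuousOn (hcompF u0 hu0c lam0 hlam0)
      have hcover : (fun s => F s (u0 s) lam0) '' Icc (0:ℝ) T ⊆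
          ⋃ c ∈ (fun s => F s (u0 s) lam0) '' Icc (0:ℝ) T, Metric.ball c εb1 :=
        fun z hz => mem_biUnion hz (Metric.mem_ball_self hεb1pos)
      obtain ⟨b2, hb2K, hfin2, hcov2⟩ :=
        hK'c.elim_finite_subcover_image (fun c _ => Metric.isOpen_ball) hcover
      have hevAll : ∀ᶠ n in atTop, ∀ c ∈ b2, ∀ p ∈ evolDomain T,
          dist (R lam0 p.1 p.2 c) (R (lam n) p.1 p.2 c) < εb1 := by
        rw [eventually_all_finite hfin2]
        intro c _
        have hcu := hcont c lam lam0 hlam hlam0 hl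
        rw [Metric.tendstoUniformlyOn_iff] at hcu
        exact hcu εb1 hεb1pos
      filter_upwards [hevAll] with n hn p hp y hy
      rcases mem_iUnion₂.1 (hcov2 hy) with ⟨c, hc, hyc⟩
      have h1 : ‖R (lam n) p.1 p.2 (y - c)‖ ≤ M * ‖y - c‖ := hnorm _ (hMn n p hp) _
      have h2 : ‖R lam0 p.1 p.2 (c - y)‖ ≤ M * ‖c - y‖ := hnorm _ (hM00 p hp) _
      have h3 : dist (R lam0 p.1 p.2 c) (R (lam n) p.1 p.2 c) < εb1 := hn c hc p hp
      rw [dist_comm, dist_eq_norm] at h3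
      have hyc' : ‖y - c‖ < εb1 := by rw [← dist_eq_norm]; exact hyc
      have hcy' : ‖c - y‖ < εb1 := by rw [← dist_eq_norm, dist_comm]; exact hyc
      have hsplit : R (lam n) p.1 p.2 y - R lam0 p.1 p.2 y
          = R (lam n) p.1 p.2 (y - c) + (R (lam n) p.1 p.2 c - R lam0 p.1 p.2 c)
            + R lam0 p.1 p.2 (c - y) := by
        rw [map_sub, map_sub]; abel
      calc ‖R (lam n) p.1 p.2 y - R lam0 p.1 p.2 y‖
          ≤ ‖R (lam n) p.1 p.2 (y - c) + (R (lam n) p.1 p.2 c - R lam0 p.1 p.2 c)‖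
            + ‖R lam0 p.1 p.2 (c - y)‖ := by rw [hsplit]; exact norm_add_le _ _
        _ ≤ ‖R (lam n) p.1 p.2 (y - c)‖ + ‖R (lam n) p.1 p.2 c - R lam0 p.1 p.2 c‖
            + ‖R lam0 p.1 p.2 (c - y)‖ := by
              have := norm_add_le (R (lam n) p.1 p.2 (y - c))
                (R (lam n) p.1 p.2 c - R lam0 p.1 p.2 c)
              linarith
        _ ≤ M * εb1 + εb1 + M * εb1 := by
              have ha := h1.trans (mul_le_mul_of_nonneg_left hyc'.le hM0)
              have hb := h2.trans (mul_le_mul_of_nonneg_left hcy'.le hM0)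
              linarith
        _ < ε / (8 * (T + 1)) := by
              have hkey : (2 * M + 2) * εb1 = ε / (8 * (T + 1)) := by
                have h1 : (T:ℝ) + 1 ≠ 0 := by positivity
                have h2 : (2 * M + 2 : ℝ) ≠ 0 := by positivity
                rw [hεb1]
                field_simp
              nlinarith [hεb1pos]
    -- assembly
    filter_upwards [Ex, Ex0, Ea, Eb] with n hEx hEx0 hEa hEb t ht
    have h0t : ((t, (0:ℝ)) : ℝ × ℝ) ∈ evolDomain T := ⟨le_refl _, ht.1, ht.2⟩
    rw [hu0.2 t ht]
    have hIn : IntervalIntegrable (fun s => R (lam n) t s (F s (u0 s) (lam n)))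
        MeasureTheory.volume 0 t :=
      hIntg (lam n) (hlam n) (hMn n) _ (hcompF u0 hu0c (lam n) (hlam n)) t ht
    have hI0 : IntervalIntegrable (fun s => R lam0 t s (F s (u0 s) lam0))
        MeasureTheory.volume 0 t :=
      hIntg lam0 hlam0 hM00 _ (hcompF u0 hu0c lam0 hlam0) t ht
    have hsum : (R (lam n) t 0 (x n) + ∫ s in (0:ℝ)..t, R (lam n) t s (F s (u0 s) (lam n)))
        - (R lam0 t 0 x0 + ∫ s in (0:ℝ)..t, R lam0 t s (F s (u0 s) lam0))
        = (R (lam n) t 0 (x n) - R lam0 t 0 x0)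
          + ∫ s in (0:ℝ)..t, (R (lam n) t s (F s (u0 s) (lam n)) - R lam0 t s (F s (u0 s) lam0)) := by
      rw [intervalIntegral.integral_sub hIn hI0]; abel
    rw [hsum]
    -- first piece
    have hfirst : ‖R (lam n) t 0 (x n) - R lam0 t 0 x0‖ < ε / 8 + ε / 8 := by
      have h1 : ‖R (lam n) t 0 (x n) - R (lam n) t 0 x0‖ ≤ M * ‖x n - x0‖ := by
        rw [← map_sub]; exact hnorm _ (hMn n _ h0t) _
      have h2 := hEx0 (t, 0) h0t
      rw [dist_comm, dist_eq_norm] at h2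
      have h3 : M * ‖x n - x0‖ < ε / 8 := by
        have := mul_le_mul_of_nonneg_left hEx.le hM0
        have hmul : M * (ε / (8 * (M + 1))) < ε / 8 := by
          rw [mul_div_assoc', div_lt_div_iff₀ (by positivity) (by norm_num)]
          nlinarith
        calc M * ‖x n - x0‖ ≤ M * (ε / (8 * (M + 1))) := this
          _ < ε / 8 := hmul
      calc ‖R (lam n) t 0 (x n) - R lam0 t 0 x0‖
          ≤ ‖R (lam n) t 0 (x n) - R (lam n) t 0 x0‖ + ‖R (lam n) t 0 x0 - R lam0 t 0 x0‖ :=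
            norm_sub_le_norm_sub_add_norm_sub _ _ _
        _ < ε / 8 + ε / 8 := add_lt_add_of_le_of_lt (h1.trans h3.le) h2
    -- second piece
    have hsecond : ‖∫ s in (0:ℝ)..t,
        (R (lam n) t s (F s (u0 s) (lam n)) - R lam0 t s (F s (u0 s) lam0))‖
        ≤ ε / (4 * (T + 1)) * T := by
      have hbd : ∀ s ∈ uIoc (0:ℝ) t,
          ‖R (lam n) t s (F s (u0 s) (lam n)) - R lam0 t s (F s (u0 s) lam0)‖
          ≤ ε / (4 * (T + 1)) := by
        intro s hs
        rw [uIoc_of_le ht.1] at hs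
        have hsT : s ∈ Icc (0:ℝ) T := ⟨hs.1.le, hs.2.trans ht.2⟩
        have hts : ((t, s) : ℝ × ℝ) ∈ evolDomain T := ⟨hs.1.le, hs.2, ht.2⟩
        have hsp : R (lam n) t s (F s (u0 s) (lam n)) - R lam0 t s (F s (u0 s) lam0)
            = R (lam n) t s (F s (u0 s) (lam n) - F s (u0 s) lam0)
              + (R (lam n) t s (F s (u0 s) lam0) - R lam0 t s (F s (u0 s) lam0)) := by
          rw [map_sub]; abel
        have hA : ‖R (lam n) t s (F s (u0 s) (lam n) - F s (u0 s) lam0)‖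
            ≤ M * (ε / (8 * (M + 1) * (T + 1))) :=
          (hnorm _ (hMn n _ hts) _).trans
            (mul_le_mul_of_nonneg_left (hEa s hsT).le hM0)
        have hB : ‖R (lam n) t s (F s (u0 s) lam0) - R lam0 t s (F s (u0 s) lam0)‖
            < ε / (8 * (T + 1)) :=
          hEb (t, s) hts _ (mem_image_of_mem _ hsT)
        have hA' : M * (ε / (8 * (M + 1) * (T + 1))) ≤ ε / (8 * (T + 1)) := by
          rw [mul_div_assoc', div_le_div_iff₀ (by positivity) (by positivity)]
          nlinarith
        calc ‖R (lam n) t s (F s (u0 s) (lam n)) - R lam0 t s (F s (u0 s) lam0)‖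
            ≤ ‖R (lam n) t s (F s (u0 s) (lam n) - F s (u0 s) lam0)‖
              + ‖R (lam n) t s (F s (u0 s) lam0) - R lam0 t s (F s (u0 s) lam0)‖ := by
              rw [hsp]; exact norm_add_le _ _
          _ ≤ ε / (8 * (T + 1)) + ε / (8 * (T + 1)) := by
              have := hA.trans hA'
              linarith
          _ = ε / (4 * (T + 1)) := by
              have h1 : (T:ℝ) + 1 ≠ 0 := by positivity
              field_simp
              ring
      have := intervalIntegral.norm_integral_le_of_norm_le_const hbd
      calc ‖∫ s in (0:ℝ)..t,
            (R (lam n) t s (F s (u0 s) (lam n)) - R lam0 t s (F s (u0 s) lam0))‖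
          ≤ ε / (4 * (T + 1)) * |t - 0| := this
        _ ≤ ε / (4 * (T + 1)) * T := by
            rw [sub_zero, abs_of_nonneg ht.1]
            exact mul_le_mul_of_nonneg_left ht.2 (by positivity)
    have hTT : ε / (4 * (T + 1)) * T < ε / 4 := by
      rw [div_mul_eq_mul_div, div_lt_div_iff₀ (by positivity) (by norm_num)]
      nlinarith
    calc ‖(R (lam n) t 0 (x n) - R lam0 t 0 x0)
          + ∫ s in (0:ℝ)..t, (R (lam n) t s (F s (u0 s) (lam n)) - R lam0 t s (F s (u0 s) lam0))‖
        ≤ ‖R (lam n) t 0 (x n) - R lam0 t 0 x0‖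
          + ‖∫ s in (0:ℝ)..t, (R (lam n) t s (F s (u0 s) (lam n)) - R lam0 t s (F s (u0 s) lam0))‖ :=
          norm_add_le _ _
      _ < (ε / 8 + ε / 8) + ε / 4 := by
          have := hsecond.trans_lt hTT
          exact add_lt_add hfirst this
      _ < ε := by linarith
  -- Step E : Grönwall bootstrap
  rw [Metric.tendstoUniformlyOn_iff]
  intro ε hε
  set c : ℝ := M * L with hcdef
  have hc : 0 < c := mul_pos (lt_of_lt_of_le one_pos hM1) hL
  set ε' : ℝ := min ε δ / (2 * Real.exp (c * T)) with hε'def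
  have hε'pos : 0 < ε' := by
    rw [hε'def]
    exact div_pos (lt_min hε hδ) (by positivity)
  have hψT : ∀ s : ℝ, s ≤ T → ε' * Real.exp (c * s) ≤ min ε δ / 2 := by
    intro s hs
    have h1 : Real.exp (c * s) ≤ Real.exp (c * T) :=
      Real.exp_le_exp.2 (mul_le_mul_of_nonneg_left hs hc.le)
    calc ε' * Real.exp (c * s) ≤ ε' * Real.exp (c * T) :=
        mul_le_mul_of_nonneg_left h1 hε'pos.le
      _ = min ε δ / 2 := by
        rw [hε'def, div_mul_eq_mul_div, mul_comm (2:ℝ) (Real.exp (c * T)),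
          ← div_div, mul_div_assoc, div_self (Real.exp_ne_zero _), mul_one]
  filter_upwards [key1 ε' hε'pos] with n hn
  -- The claim, proved by a continuity / Grönwall argument
  have Claim : ∀ t ∈ Icc (0:ℝ) T, ‖u n t - u0 t‖ ≤ ε' * Real.exp (c * t) := by
    by_contra hcon
    push_neg at hcon
    set B : Set ℝ := {t | t ∈ Icc (0:ℝ) T ∧ ε' * Real.exp (c * t) < ‖u n t - u0 t‖} with hBdef
    have hBne : B.Nonempty := by
      obtain ⟨t, ht, hlt⟩ := hcon
      exact ⟨t, ht, hlt⟩
    have hBbd : BddBelow B := ⟨0, fun t ht => ht.1.1⟩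
    set ts : ℝ := sInf B with htsdef
    have htscl : ts ∈ closure B := csInf_mem_closure hBne hBbd
    have hBsub : B ⊆ Icc (0:ℝ) T := fun t ht => ht.1
    have htsIcc : ts ∈ Icc (0:ℝ) T := closure_minimal hBsub isClosed_Icc htscl
    -- lower estimate at ts
    have hφc : ContinuousOn (fun t => ‖u n t - u0 t‖) (Icc (0:ℝ) T) :=
      ((hu n).1.sub hu0.1).norm
    have hlower : ε' * Real.exp (c * ts) ≤ ‖u n ts - u0 ts‖ := by
      haveI hNeBot : (𝓝[B] ts).NeBot := mem_closure_iff_nhdsWithin_neBot.1 htscl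
      have hg : ContinuousWithinAt (fun t => ε' * Real.exp (c * t) - ‖u n t - u0 t‖) B ts :=
        ((continuous_const.mul (Real.continuous_exp.comp
          (continuous_const.mul continuous_id))).continuousWithinAt).sub
          ((hφc ts htsIcc).mono hBsub)
      have hev : ∀ᶠ t in 𝓝[B] ts, ε' * Real.exp (c * t) - ‖u n t - u0 t‖ ≤ 0 := by
        filter_upwards [self_mem_nhdsWithin] with t htB
        have := htB.2
        simp only [sub_nonpos]
        linarith
      have h7 : ε' * Real.exp (c * ts) - ‖u n ts - u0 ts‖ ≤ 0 := le_of_tendsto hg hev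
      linarith
    have hlow : ∀ τ ∈ Icc (0:ℝ) T, τ < ts → ‖u n τ - u0 τ‖ ≤ ε' * Real.exp (c * τ) := by
      intro τ hτ hlt
      by_contra hcon2
      push_neg at hcon2
      exact absurd ⟨hτ, hcon2⟩ (notMem_of_lt_csInf hlt hBbd)
    -- integrability
    have hIun : IntervalIntegrable (fun s => R (lam n) ts s (F s (u n s) (lam n)))
        MeasureTheory.volume 0 ts :=
      hIntg (lam n) (hlam n) (hMn n) _ (hcompF (u n) (hu n).1 (lam n) (hlam n)) ts htsIcc
    have hIu0 : IntervalIntegrable (fun s => R (lam n) ts s (F s (u0 s) (lam n)))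
        MeasureTheory.volume 0 ts :=
      hIntg (lam n) (hlam n) (hMn n) _ (hcompF u0 hu0c (lam n) (hlam n)) ts htsIcc
    have hsplit : u n ts - u0 ts
        = ((R (lam n) ts 0 (x n) + ∫ s in (0:ℝ)..ts, R (lam n) ts s (F s (u0 s) (lam n))) - u0 ts)
          + ∫ s in (0:ℝ)..ts, R (lam n) ts s (F s (u n s) (lam n) - F s (u0 s) (lam n)) := by
      have heq : (fun s => R (lam n) ts s (F s (u n s) (lam n) - F s (u0 s) (lam n)))
          = fun s => R (lam n) ts s (F s (u n s) (lam n)) - R (lam n) ts s (F s (u0 s) (lam n)) :=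
        funext fun s => map_sub _ _ _
      rw [heq, intervalIntegral.integral_sub hIun hIu0, (hu n).2 ts htsIcc]
      abel
    have hInorm : IntervalIntegrable
        (fun s => ‖R (lam n) ts s (F s (u n s) (lam n) - F s (u0 s) (lam n))‖)
        MeasureTheory.volume 0 ts := by
      apply ContinuousOn.intervalIntegrable
      rw [uIcc_of_le htsIcc.1]
      exact (evol_apply_contOn (hES (lam n) (hlam n)) hM0 (hMn n)
        ((hcompF (u n) (hu n).1 (lam n) (hlam n)).sub
          (hcompF u0 hu0c (lam n) (hlam n))) htsIcc).norm
    have hIexp : IntervalIntegrable (fun s => c * ε' * Real.exp (c * s))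
        MeasureTheory.volume 0 ts :=
      Continuous.intervalIntegrable
        (continuous_const.mul (Real.continuous_exp.comp
          (continuous_const.mul continuous_id))) _ _
    have haes : ∀ᵐ s ∂(MeasureTheory.volume.restrict (Icc (0:ℝ) ts)),
        ‖R (lam n) ts s (F s (u n s) (lam n) - F s (u0 s) (lam n))‖
          ≤ c * ε' * Real.exp (c * s) := by
      have h1 : ∀ᵐ s ∂(MeasureTheory.volume.restrict (Icc (0:ℝ) ts)), s ∈ Icc (0:ℝ) ts :=
        ae_restrict_mem measurableSet_Icc
      have h2 : ∀ᵐ s ∂(MeasureTheory.volume.restrict (Icc (0:ℝ) ts)), s ≠ ts := by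
        rw [MeasureTheory.ae_iff]
        have hsub : {s : ℝ | ¬ s ≠ ts} ⊆ {ts} := by
          intro s hs
          simp only [mem_setOf_eq, not_not] at hs
          simp [hs]
        have h0 : (MeasureTheory.volume.restrict (Icc (0:ℝ) ts)) {ts} = 0 :=
          le_antisymm (le_trans (Measure.restrict_apply_le _ _)
            (le_of_eq Real.volume_singleton)) zero_le
        exact measure_mono_null hsub h0
      filter_upwards [h1, h2] with s hs hne
      have hslt : s < ts := lt_of_le_of_ne hs.2 hne
      have hsT : s ∈ Icc (0:ℝ) T := ⟨hs.1, hslt.le.trans htsIcc.2⟩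
      have hφs : ‖u n s - u0 s‖ ≤ ε' * Real.exp (c * s) := hlow s hsT hslt
      have hδs : ‖u n s - u0 s‖ < δ := by
        have hψ := hψT s hsT.2
        have hmin : min ε δ / 2 < δ := by
          have := min_le_right ε δ
          linarith [lt_min hε hδ]
        linarith
      have hFs := hLip s hsT (lam n) (hlam n) (u0 s) (mem_image_of_mem u0 hsT) (u n s) hδs
      have hts' : ((ts, s) : ℝ × ℝ) ∈ evolDomain T := ⟨hs.1, hslt.le, htsIcc.2⟩
      calc ‖R (lam n) ts s (F s (u n s) (lam n) - F s (u0 s) (lam n))‖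
          ≤ M * ‖F s (u n s) (lam n) - F s (u0 s) (lam n)‖ := hnorm _ (hMn n _ hts') _
        _ ≤ M * (L * (ε' * Real.exp (c * s))) := by
            have h5 : ‖F s (u n s) (lam n) - F s (u0 s) (lam n)‖
                ≤ L * (ε' * Real.exp (c * s)) :=
              hFs.trans (mul_le_mul_of_nonneg_left hφs hL.le)
            exact mul_le_mul_of_nonneg_left h5 hM0
        _ = c * ε' * Real.exp (c * s) := by rw [hcdef]; ring
    -- the exponential integral
    have hderiv : ∀ s ∈ uIcc (0:ℝ) ts, HasDerivAt (fun τ => ε' * Real.exp (c * τ))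
        (c * ε' * Real.exp (c * s)) s := by
      intro s _
      have h1 : HasDerivAt (fun τ : ℝ => c * τ) c s := by
        simpa using (hasDerivAt_id s).const_mul c
      have h2 : HasDerivAt (fun τ : ℝ => Real.exp (c * τ)) (Real.exp (c * s) * c) s :=
        h1.exp
      have h3 := h2.const_mul ε'
      have heq : c * ε' * Real.exp (c * s) = ε' * (Real.exp (c * s) * c) := by ring
      rw [heq]
      exact h3
    have hint : ∫ s in (0:ℝ)..ts, c * ε' * Real.exp (c * s)
        = ε' * Real.exp (c * ts) - ε' := by
      rw [intervalIntegral.integral_eq_sub_of_hasDerivAt hderiv hIexp]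
      simp
    -- the contradiction
    have e1 := hn ts htsIcc
    have e2 : ‖∫ s in (0:ℝ)..ts, R (lam n) ts s (F s (u n s) (lam n) - F s (u0 s) (lam n))‖
        ≤ ∫ s in (0:ℝ)..ts, ‖R (lam n) ts s (F s (u n s) (lam n) - F s (u0 s) (lam n))‖ :=
      intervalIntegral.norm_integral_le_integral_norm htsIcc.1
    have e3 : ∫ s in (0:ℝ)..ts, ‖R (lam n) ts s (F s (u n s) (lam n) - F s (u0 s) (lam n))‖
        ≤ ∫ s in (0:ℝ)..ts, c * ε' * Real.exp (c * s) :=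
      intervalIntegral.integral_mono_ae_restrict htsIcc.1 hInorm hIexp haes
    have e4 : ‖u n ts - u0 ts‖ < ε' * Real.exp (c * ts) := by
      calc ‖u n ts - u0 ts‖
          ≤ ‖(R (lam n) ts 0 (x n)
              + ∫ s in (0:ℝ)..ts, R (lam n) ts s (F s (u0 s) (lam n))) - u0 ts‖
            + ‖∫ s in (0:ℝ)..ts, R (lam n) ts s (F s (u n s) (lam n) - F s (u0 s) (lam n))‖ := by
            rw [hsplit]; exact norm_add_le _ _
        _ < ε' + (ε' * Real.exp (c * ts) - ε') := by
            have h6 := e2.trans (e3.trans_eq hint)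
            exact add_lt_add_of_lt_of_le e1 h6
        _ = ε' * Real.exp (c * ts) := by ring
    linarith
  intro t ht
  rw [dist_comm, dist_eq_norm]
  have h1 := Claim t ht
  have h2 := hψT t ht.2
  have h3 : min ε δ / 2 < ε := by
    have := min_le_left ε δ
    linarith [lt_min hε hδ]
  linarith
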